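/- Define Sh(c, φ) = 2c − 2b − a, where a and b are the unique positive reals such that there is a hyperbolic triangle with two sides of length b meeting the side of length a at angles 2π/3, and such that the triangle with sides a, b and included angle 2π/3 has third side c with the angle between the two sides of length c at the original vertex being φ (as in the shortening procedure). Then for fixed c > 0, Sh(c, φ) is a strictly decreasing function of φ on (0, 2π/3), and Sh(c, 2π/3) = 0. -/

import Mathlib

open Real

/-- Key inequality: moving along direction (2, -1) in (a,b) strictly increases
`F a b = cosh a * cosh b + (1/2) * sinh a * sinh b` when `a > 0`. -/
lemma shortening_F_key (a b δ : ℝ) (ha : 0 < a) (hδ : 0 < δ) :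
    Real.cosh a * Real.cosh (b + δ) + (1 / 2) * Real.sinh a * Real.sinh (b + δ)
      < Real.cosh (a + 2 * δ) * Real.cosh b
        + (1 / 2) * Real.sinh (a + 2 * δ) * Real.sinh b := by
  set g : ℝ → ℝ := fun t => Real.cosh (a + 2 * t) * Real.cosh (b + δ - t)
      + (1 / 2) * (Real.sinh (a + 2 * t) * Real.sinh (b + δ - t)) with hg
  have hderiv : ∀ t : ℝ, HasDerivAt g
      ((3 / 2) * (Real.sinh (a + 2 * t) * Real.cosh (b + δ - t))) t := by
    intro t
    have h1 : HasDerivAt (fun t : ℝ => a + 2 * t) 2 t := by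
      simpa using ((hasDerivAt_id t).const_mul 2).const_add a
    have h2 : HasDerivAt (fun t : ℝ => b + δ - t) (-1) t := by
      simpa using (hasDerivAt_id t).const_sub (b + δ)
    have h := (h1.cosh.mul h2.cosh).add ((h1.sinh.mul h2.sinh).const_mul (1 / 2))
    exact h.congr_deriv (by ring)
  have hmono : StrictMonoOn g (Set.Icc 0 δ) := by
    apply strictMonoOn_of_deriv_pos (convex_Icc 0 δ)
    · exact Continuous.continuousOn (by
        fun_prop)
    · intro t ht
      rw [interior_Icc] at ht
      rw [(hderiv t).deriv]
      have h1 : 0 < Real.sinh (a + 2 * t) := by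
        rw [Real.sinh_pos_iff]; nlinarith [ht.1]
      positivity
  have := hmono (Set.left_mem_Icc.2 hδ.le) (Set.right_mem_Icc.2 hδ.le) hδ
  have h0 : g 0 = Real.cosh a * Real.cosh (b + δ) + (1/2) * (Real.sinh a * Real.sinh (b + δ)) := by simp [hg]
  have h1 : g δ = Real.cosh (a + 2 * δ) * Real.cosh b + (1/2) * (Real.sinh (a + 2 * δ) * Real.sinh b) := by simp [hg]
  rw [h0, h1] at this
  linarith

theorem shortening_strictAnti_in_angle (c : ℝ) (hc : 0 < c) (a b : ℝ → ℝ)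
    (ha : ∀ φ ∈ Set.Ioo 0 (2 * π / 3), 0 < a φ)
    (ha' : 0 ≤ a (2 * π / 3))
    (hb : ∀ φ ∈ Set.Ioc 0 (2 * π / 3), 0 < b φ)
    (hcos : ∀ φ ∈ Set.Ioc 0 (2 * π / 3),
      Real.cosh c = Real.cosh (a φ) * Real.cosh (b φ)
        + (1 / 2) * Real.sinh (a φ) * Real.sinh (b φ))
    (hsin : ∀ φ ∈ Set.Ioc 0 (2 * π / 3),
      Real.sin (φ / 2) * Real.sinh c = Real.sin (2 * π / 3) * Real.sinh (b φ)) :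
    StrictAntiOn (fun φ => 2 * c - 2 * b φ - a φ) (Set.Ioo 0 (2 * π / 3)) ∧
      2 * c - 2 * b (2 * π / 3) - a (2 * π / 3) = 0 := by
  have hπ := Real.pi_pos
  constructor
  · -- strict antitonicity
    intro φ₁ hφ₁ φ₂ hφ₂ h12
    have hφ₁' : φ₁ ∈ Set.Ioc 0 (2 * π / 3) := ⟨hφ₁.1, hφ₁.2.le⟩
    have hφ₂' : φ₂ ∈ Set.Ioc 0 (2 * π / 3) := ⟨hφ₂.1, hφ₂.2.le⟩
    have ha₁ := ha φ₁ hφ₁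
    have ha₂ := ha φ₂ hφ₂
    have hb₁ := hb φ₁ hφ₁'
    have hb₂ := hb φ₂ hφ₂'
    -- b is strictly increasing via the law of sines
    have hsin23 : 0 < Real.sin (2 * π / 3) := by
      apply Real.sin_pos_of_pos_of_lt_pi <;> nlinarith
    have hsinlt : Real.sin (φ₁ / 2) < Real.sin (φ₂ / 2) := by
      apply Real.strictMonoOn_sin ?_ ?_ (by linarith)
      · constructor <;> nlinarith [hφ₁.1, hφ₁.2]
      · constructor <;> nlinarith [hφ₂.1, hφ₂.2]
    have hsinhc : 0 < Real.sinh c := Real.sinh_pos_iff.2 hc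
    have hblt : b φ₁ < b φ₂ := by
      rw [← Real.sinh_lt_sinh]
      have e1 := hsin φ₁ hφ₁'
      have e2 := hsin φ₂ hφ₂'
      nlinarith
    -- main inequality: 2 * b φ₁ + a φ₁ < 2 * b φ₂ + a φ₂
    have hkey : 2 * b φ₁ + a φ₁ < 2 * b φ₂ + a φ₂ := by
      by_contra hcon
      push_neg at hcon
      set δ := b φ₂ - b φ₁ with hδdef
      have hδ : 0 < δ := by linarith
      have hge : a φ₂ + 2 * δ ≤ a φ₁ := by simp [hδdef]; linarith
      -- F is monotone in the first argument (for positive args)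
      have hmonoF : Real.cosh (a φ₂ + 2 * δ) * Real.cosh (b φ₁)
          + (1 / 2) * Real.sinh (a φ₂ + 2 * δ) * Real.sinh (b φ₁)
          ≤ Real.cosh (a φ₁) * Real.cosh (b φ₁)
          + (1 / 2) * Real.sinh (a φ₁) * Real.sinh (b φ₁) := by
        have hcosh : Real.cosh (a φ₂ + 2 * δ) ≤ Real.cosh (a φ₁) := by
          rw [Real.cosh_le_cosh]
          rw [abs_of_pos (by linarith), abs_of_pos ha₁]; exact hge
        have hsinh : Real.sinh (a φ₂ + 2 * δ) ≤ Real.sinh (a φ₁) :=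
          Real.sinh_le_sinh.2 hge
        have h1 : 0 < Real.sinh (b φ₁) := Real.sinh_pos_iff.2 hb₁
        have h2 : (0:ℝ) < Real.cosh (b φ₁) := Real.cosh_pos _
        nlinarith
      have hstep := shortening_F_key (a φ₂) (b φ₁) δ ha₂ hδ
      have hb₂eq : b φ₁ + δ = b φ₂ := by simp [hδdef]
      rw [hb₂eq] at hstep
      have e1 := hcos φ₁ hφ₁'
      have e2 := hcos φ₂ hφ₂'
      nlinarith
    simp only
    linarith
  · -- value at 2π/3
    have hmem : (2 * π / 3) ∈ Set.Ioc 0 (2 * π / 3) := ⟨by linarith, le_refl _⟩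
    have e1 := hsin (2 * π / 3) hmem
    have e2 := hcos (2 * π / 3) hmem
    have hhalf : (2 * π / 3) / 2 = π - 2 * π / 3 := by ring
    have hsineq : Real.sin ((2 * π / 3) / 2) = Real.sin (2 * π / 3) := by
      rw [hhalf, Real.sin_pi_sub]
    have hsin23 : 0 < Real.sin (2 * π / 3) := by
      apply Real.sin_pos_of_pos_of_lt_pi <;> nlinarith
    have hbc : b (2 * π / 3) = c := by
      have : Real.sinh (b (2 * π / 3)) = Real.sinh c := by
        rw [hsineq] at e1; nlinarith
      exact Real.sinh_injective this
    rw [hbc] at e2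
    have hsa : Real.sinh (a (2 * π / 3)) = 0 := by
      have h1 : 0 ≤ Real.sinh (a (2 * π / 3)) := by
        rw [← Real.sinh_zero]; exact Real.sinh_le_sinh.2 ha'
      have h2 : 1 ≤ Real.cosh (a (2 * π / 3)) := Real.one_le_cosh _
      have h3 : 0 < Real.sinh c := Real.sinh_pos_iff.2 hc
      have h4 : 0 < Real.cosh c := Real.cosh_pos _
      nlinarith
    have haz : a (2 * π / 3) = 0 := Real.sinh_eq_zero.mp hsa
    rw [hbc, haz]; ring
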